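/- For an LTLf formula ψ in xnf form (i.e., all temporal atoms of ψ^p are ○- or ●-formulas) whose propositionalization has been fully evaluated on all variables of P by a letter σ, the formula RmNext(xnf(ψ)^p |_σ), regarded as an LTLf formula, satisfies: for every nonempty finite trace ρ with ρ[0] = σ, ρ,0 ⊨ ψ if and only if the suffix ρ[1..] satisfies RmNext(xnf(ψ)^p |_σ) (where the empty suffix is evaluated by empty-trace semantics). -/

import Mathlib

namespace LTLfSynth

open scoped Classical

/-- LTLf formulas in negation normal form. -/
inductive LTLf (P : Type*) where
  | tt : LTLf P
  | ff : LTLf P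
  | atom : P → LTLf P
  | natom : P → LTLf P
  | and : LTLf P → LTLf P → LTLf P
  | or : LTLf P → LTLf P → LTLf P
  | next : LTLf P → LTLf P
  | wnext : LTLf P → LTLf P
  | until_ : LTLf P → LTLf P → LTLf P
  | release : LTLf P → LTLf P → LTLf P

variable {P : Type*}

/-- ◇true -/
def diamondTrue : LTLf P := .until_ .tt .tt

/-- □false -/
def boxFalse : LTLf P := .release .ff .ff

/-- Finite-trace satisfaction `ρ, i ⊨ φ`, where position `ρ.length` (and beyond)
corresponds to the empty suffix (empty-trace semantics). -/
def Sat (ρ : List (Set P)) : LTLf P → ℕ → Prop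
  | .tt, _ => True
  | .ff, _ => False
  | .atom p, i => i < ρ.length ∧ p ∈ ρ.getD i ∅
  | .natom p, i => i < ρ.length ∧ p ∉ ρ.getD i ∅
  | .and φ ψ, i => Sat ρ φ i ∧ Sat ρ ψ i
  | .or φ ψ, i => Sat ρ φ i ∨ Sat ρ ψ i
  | .next φ, i => i + 1 < ρ.length ∧ Sat ρ φ (i + 1)
  | .wnext φ, i => i + 1 < ρ.length → Sat ρ φ (i + 1)
  | .until_ φ ψ, i =>
      ∃ j, i ≤ j ∧ j < ρ.length ∧ Sat ρ ψ j ∧ ∀ k, i ≤ k → k < j → Sat ρ φ k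
  | .release φ ψ, i =>
      ∀ j, i ≤ j → j < ρ.length → (Sat ρ ψ j ∨ ∃ k, i ≤ k ∧ k < j ∧ Sat ρ φ k)

/-- The next-normal-form transformation. -/
def xnf : LTLf P → LTLf P
  | .and φ ψ => .and (xnf φ) (xnf ψ)
  | .or φ ψ => .or (xnf φ) (xnf ψ)
  | .until_ .tt .tt => .until_ .tt .tt
  | .until_ φ ψ => .or (.and (xnf ψ) diamondTrue) (.and (xnf φ) (.next (.until_ φ ψ)))
  | .release .ff .ff => .release .ff .ff
  | .release φ ψ => .and (.or (xnf ψ) boxFalse) (.or (xnf φ) (.wnext (.release φ ψ)))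
  | φ => φ

/-- Substitute the letter `σ` for the propositional literals of a (propositionalized)
formula, leaving temporal subformulas untouched: `φ^p |_σ`. -/
noncomputable def substLit (σ : Set P) : LTLf P → LTLf P
  | .atom p => if p ∈ σ then .tt else .ff
  | .natom p => if p ∈ σ then .ff else .tt
  | .and φ ψ => .and (substLit σ φ) (substLit σ ψ)
  | .or φ ψ => .or (substLit σ φ) (substLit σ ψ)
  | φ => φ

/-- The `RmNext` function on (propositionalized) formulas in xnf form. -/
def rmNext : LTLf P → LTLf P
  | .until_ .tt .tt => .tt
  | .release .ff .ff => .ff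
  | .and φ ψ => .and (rmNext φ) (rmNext ψ)
  | .or φ ψ => .or (rmNext φ) (rmNext ψ)
  | .next φ => .and φ diamondTrue
  | .wnext φ => .or φ boxFalse
  | φ => φ

lemma getD_tail' (ρ : List (Set P)) (i : ℕ) :
    ρ.tail.getD i ∅ = ρ.getD (i + 1) ∅ := by
  cases ρ <;> rfl

lemma len_tail' (ρ : List (Set P)) : ρ.tail.length = ρ.length - 1 := by
  cases ρ <;> simp

lemma sat_shift (ρ : List (Set P)) (φ : LTLf P) :
    ∀ i, Sat ρ φ (i + 1) ↔ Sat ρ.tail φ i := by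
  induction φ with
  | tt => intro i; simp [Sat]
  | ff => intro i; simp [Sat]
  | atom p =>
      intro i
      simp only [Sat, getD_tail', len_tail']
      constructor <;> rintro ⟨h1, h2⟩ <;> exact ⟨by omega, h2⟩
  | natom p =>
      intro i
      simp only [Sat, getD_tail', len_tail']
      constructor <;> rintro ⟨h1, h2⟩ <;> exact ⟨by omega, h2⟩
  | and φ ψ ihφ ihψ => intro i; simp [Sat, ihφ, ihψ]
  | or φ ψ ihφ ihψ => intro i; simp [Sat, ihφ, ihψ]
  | next φ ih =>
      intro i
      simp only [Sat, len_tail', ← ih]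
      constructor <;> rintro ⟨h1, h2⟩ <;> exact ⟨by omega, h2⟩
  | wnext φ ih =>
      intro i
      simp only [Sat, len_tail', ← ih]
      constructor <;> intro h1 h2 <;> exact h1 (by omega)
  | until_ φ ψ ihφ ihψ =>
      intro i
      simp only [Sat, len_tail']
      constructor
      · rintro ⟨j, hij, hj, hψ, hk⟩
        refine ⟨j - 1, by omega, by omega, ?_, ?_⟩
        · exact (ihψ (j - 1)).mp (by rw [show j - 1 + 1 = j by omega]; exact hψ)
        · intro k hk1 hk2
          exact (ihφ k).mp (hk (k + 1) (by omega) (by omega))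
      · rintro ⟨j, hij, hj, hψ, hk⟩
        refine ⟨j + 1, by omega, by omega, (ihψ j).mpr hψ, ?_⟩
        intro k hk1 hk2
        have := (ihφ (k - 1)).mpr (hk (k - 1) (by omega) (by omega))
        rwa [show k - 1 + 1 = k by omega] at this
  | release φ ψ ihφ ihψ =>
      intro i
      simp only [Sat, len_tail']
      constructor
      · intro H j hij hj
        rcases H (j + 1) (by omega) (by omega) with hψ | ⟨k, hk1, hk2, hφ⟩
        · exact Or.inl ((ihψ j).mp hψ)
        · refine Or.inr ⟨k - 1, by omega, by omega, ?_⟩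
          exact (ihφ (k - 1)).mp (by rw [show k - 1 + 1 = k by omega]; exact hφ)
      · intro H j hij hj
        rcases H (j - 1) (by omega) (by omega) with hψ | ⟨k, hk1, hk2, hφ⟩
        · refine Or.inl ?_
          have := (ihψ (j - 1)).mpr hψ
          rwa [show j - 1 + 1 = j by omega] at this
        · exact Or.inr ⟨k + 1, by omega, by omega, (ihφ k).mpr hφ⟩

lemma xnf_until_eq (φ ψ : LTLf P) :
    (φ = LTLf.tt ∧ ψ = LTLf.tt ∧ xnf (LTLf.until_ φ ψ) = LTLf.until_ .tt .tt) ∨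
      xnf (LTLf.until_ φ ψ) =
        .or (.and (xnf ψ) diamondTrue) (.and (xnf φ) (.next (.until_ φ ψ))) := by
  cases φ <;> cases ψ <;>
    first
      | exact Or.inl ⟨rfl, rfl, rfl⟩
      | exact Or.inr rfl

lemma xnf_release_eq (φ ψ : LTLf P) :
    (φ = LTLf.ff ∧ ψ = LTLf.ff ∧ xnf (LTLf.release φ ψ) = LTLf.release .ff .ff) ∨
      xnf (LTLf.release φ ψ) =
        .and (.or (xnf ψ) boxFalse) (.or (xnf φ) (.wnext (.release φ ψ))) := by
  cases φ <;> cases ψ <;>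
    first
      | exact Or.inl ⟨rfl, rfl, rfl⟩
      | exact Or.inr rfl

lemma sat_diamondTrue (ρ : List (Set P)) (i : ℕ) :
    Sat ρ (diamondTrue (P := P)) i ↔ i < ρ.length := by
  constructor
  · rintro ⟨j, hij, hj, -, -⟩
    omega
  · intro h
    exact ⟨i, le_refl i, h, trivial, fun k h1 h2 => absurd h2 (by omega)⟩

lemma sat_boxFalse (ρ : List (Set P)) (i : ℕ) :
    Sat ρ (boxFalse (P := P)) i ↔ ρ.length ≤ i := by
  constructor
  · intro H
    by_contra hlt
    rcases H i (le_refl i) (by omega) with h | ⟨k, h1, h2, h3⟩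
    · exact h
    · exact h3
  · intro h j hij hj
    omega

lemma expand_until (ρ : List (Set P)) (φ ψ : LTLf P) (i : ℕ) :
    Sat ρ (LTLf.until_ φ ψ) i ↔
      (Sat ρ ψ i ∧ i < ρ.length) ∨
        (Sat ρ φ i ∧ (i + 1 < ρ.length ∧ Sat ρ (LTLf.until_ φ ψ) (i + 1))) := by
  constructor
  · rintro ⟨j, hij, hj, hψ, hk⟩
    rcases eq_or_lt_of_le hij with rfl | hlt
    · exact Or.inl ⟨hψ, hj⟩
    · refine Or.inr ⟨hk i (le_refl i) hlt, by omega,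
        j, by omega, hj, hψ, fun k h1 h2 => hk k (by omega) h2⟩
  · rintro (⟨hψ, hi⟩ | ⟨hφ, hi, j, hij, hj, hψ, hk⟩)
    · exact ⟨i, le_refl i, hi, hψ, fun k h1 h2 => absurd h2 (by omega)⟩
    · refine ⟨j, by omega, hj, hψ, fun k h1 h2 => ?_⟩
      rcases eq_or_lt_of_le h1 with rfl | hlt
      · exact hφ
      · exact hk k (by omega) h2

lemma expand_release (ρ : List (Set P)) (φ ψ : LTLf P) (i : ℕ) :
    Sat ρ (LTLf.release φ ψ) i ↔
      (Sat ρ ψ i ∨ ρ.length ≤ i) ∧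
        (Sat ρ φ i ∨ (i + 1 < ρ.length → Sat ρ (LTLf.release φ ψ) (i + 1))) := by
  constructor
  · intro H
    constructor
    · by_cases hi : i < ρ.length
      · rcases H i (le_refl i) hi with h | ⟨k, h1, h2, h3⟩
        · exact Or.inl h
        · omega
      · exact Or.inr (by omega)
    · by_cases hφ : Sat ρ φ i
      · exact Or.inl hφ
      · refine Or.inr fun hi j hij hj => ?_
        rcases H j (by omega) hj with h | ⟨k, h1, h2, h3⟩
        · exact Or.inl h
        · refine Or.inr ⟨k, ?_, h2, h3⟩
          rcases eq_or_lt_of_le h1 with rfl | hlt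
          · exact absurd h3 hφ
          · omega
  · rintro ⟨h1, h2⟩ j hij hj
    rcases eq_or_lt_of_le hij with rfl | hlt
    · rcases h1 with h | h
      · exact Or.inl h
      · omega
    · rcases h2 with hφ | hrel
      · exact Or.inr ⟨i, le_refl i, hlt, hφ⟩
      · rcases hrel (by omega) j (by omega) hj with h | ⟨k, hk1, hk2, hk3⟩
        · exact Or.inl h
        · exact Or.inr ⟨k, by omega, hk2, hk3⟩

lemma diamond_aux (L i : ℕ) :
    (∃ j, i ≤ j ∧ j < L ∧ True ∧ ∀ k, i ≤ k → k < j → True) ↔ i < L :=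
  ⟨fun ⟨j, h1, h2, _, _⟩ => by omega,
   fun h => ⟨i, le_refl i, h, trivial, fun _ _ _ => trivial⟩⟩

lemma box_aux (L i : ℕ) :
    (∀ j, i ≤ j → j < L → (False ∨ ∃ k, i ≤ k ∧ k < j ∧ False)) ↔ L ≤ i := by
  constructor
  · intro H
    by_contra h
    rcases H i (le_refl i) (by omega) with h' | ⟨k, _, _, h'⟩ <;> exact h'
  · intro h j h1 h2
    omega

lemma sat_xnf (ρ : List (Set P)) (φ : LTLf P) :
    ∀ i, Sat ρ (xnf φ) i ↔ Sat ρ φ i := by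
  induction φ with
  | tt => intro i; rfl
  | ff => intro i; rfl
  | atom p => intro i; rfl
  | natom p => intro i; rfl
  | and φ ψ ihφ ihψ => intro i; simp only [xnf, Sat, ihφ, ihψ]
  | or φ ψ ihφ ihψ => intro i; simp only [xnf, Sat, ihφ, ihψ]
  | next φ ih => intro i; rfl
  | wnext φ ih => intro i; rfl
  | until_ φ ψ ihφ ihψ =>
      intro i
      rcases xnf_until_eq φ ψ with ⟨rfl, rfl, heq⟩ | heq
      · rw [heq]
      · rw [heq, expand_until ρ φ ψ i]
        simp only [Sat, ihφ, ihψ, diamondTrue, diamond_aux]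
  | release φ ψ ihφ ihψ =>
      intro i
      rcases xnf_release_eq φ ψ with ⟨rfl, rfl, heq⟩ | heq
      · rw [heq]
      · rw [heq, expand_release ρ φ ψ i]
        simp only [Sat, ihφ, ihψ, boxFalse, box_aux]

lemma sat_substLit (ρ : List (Set P)) (σ : Set P) (i : ℕ)
    (hi : i < ρ.length) (hσ : ρ.getD i ∅ = σ) (φ : LTLf P) :
    Sat ρ (substLit σ φ) i ↔ Sat ρ φ i := by
  induction φ with
  | tt => rfl
  | ff => rfl
  | atom p =>
      simp only [substLit]
      split
      · next hp => simp only [Sat, hσ]; exact ⟨fun _ => ⟨hi, hp⟩, fun _ => trivial⟩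
      · next hp => simp only [Sat, hσ]; exact ⟨fun h => h.elim, fun h => hp h.2⟩
  | natom p =>
      simp only [substLit]
      split
      · next hp => simp only [Sat, hσ]; exact ⟨fun h => h.elim, fun h => h.2 hp⟩
      · next hp => simp only [Sat, hσ]; exact ⟨fun _ => ⟨hi, hp⟩, fun _ => trivial⟩
  | and φ ψ ihφ ihψ => simp only [substLit, Sat, ihφ, ihψ]
  | or φ ψ ihφ ihψ => simp only [substLit, Sat, ihφ, ihψ]
  | next φ ih => rfl
  | wnext φ ih => rfl
  | until_ φ ψ ihφ ihψ => rfl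
  | release φ ψ ihφ ihψ => rfl

/-- The shape of formulas after `substLit ∘ xnf`. -/
inductive XnfProp : LTLf P → Prop
  | tt : XnfProp .tt
  | ff : XnfProp .ff
  | and {φ ψ} : XnfProp φ → XnfProp ψ → XnfProp (.and φ ψ)
  | or {φ ψ} : XnfProp φ → XnfProp ψ → XnfProp (.or φ ψ)
  | next (φ) : XnfProp (.next φ)
  | wnext (φ) : XnfProp (.wnext φ)
  | dt : XnfProp (.until_ .tt .tt)
  | bf : XnfProp (.release .ff .ff)

lemma xnfProp_substLit_xnf (σ : Set P) (ψ : LTLf P) :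
    XnfProp (substLit σ (xnf ψ)) := by
  induction ψ with
  | tt => exact .tt
  | ff => exact .ff
  | atom p =>
      show XnfProp (substLit σ (.atom p))
      simp only [substLit]
      split <;> constructor
  | natom p =>
      show XnfProp (substLit σ (.natom p))
      simp only [substLit]
      split <;> constructor
  | and φ ψ ihφ ihψ => exact .and ihφ ihψ
  | or φ ψ ihφ ihψ => exact .or ihφ ihψ
  | next φ ih => exact .next _
  | wnext φ ih => exact .wnext _
  | until_ φ ψ ihφ ihψ =>
      rcases xnf_until_eq φ ψ with ⟨rfl, rfl, heq⟩ | heq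
      · rw [heq]; exact .dt
      · rw [heq]
        exact .or (.and ihψ .dt) (.and ihφ (.next _))
  | release φ ψ ihφ ihψ =>
      rcases xnf_release_eq φ ψ with ⟨rfl, rfl, heq⟩ | heq
      · rw [heq]; exact .bf
      · rw [heq]
        exact .and (.or ihψ .bf) (.or ihφ (.wnext _))

lemma sat_rmNext (ρ : List (Set P)) (hρ : 0 < ρ.length) {φ : LTLf P}
    (hφ : XnfProp φ) : Sat ρ φ 0 ↔ Sat ρ.tail (rmNext φ) 0 := by
  induction hφ with
  | tt => simp [rmNext, Sat]
  | ff => simp [rmNext, Sat]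
  | and h1 h2 ih1 ih2 => simp only [rmNext, Sat, ih1, ih2]
  | or h1 h2 ih1 ih2 => simp only [rmNext, Sat, ih1, ih2]
  | next φ =>
      show (0 + 1 < ρ.length ∧ Sat ρ φ (0 + 1)) ↔ _
      simp only [rmNext, Sat, diamondTrue, diamond_aux, sat_shift, len_tail']
      constructor <;> rintro ⟨h1, h2⟩
      · exact ⟨h2, by omega⟩
      · exact ⟨by omega, h1⟩
  | wnext φ =>
      show (0 + 1 < ρ.length → Sat ρ φ (0 + 1)) ↔ _
      simp only [rmNext, Sat, boxFalse, box_aux, sat_shift, len_tail']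
      constructor
      · intro h
        by_cases hl : 0 + 1 < ρ.length
        · exact Or.inl (h hl)
        · exact Or.inr (by omega)
      · rintro (h | h) h1
        · exact h
        · omega
  | dt =>
      simp only [rmNext, Sat, diamond_aux]
      exact iff_of_true hρ trivial
  | bf =>
      simp only [rmNext, Sat, box_aux]
      exact iff_of_false (by omega) not_false

/-- for a nonempty trace `ρ` starting with letter `σ`, `ρ, 0 ⊨ ψ` iff the
suffix `ρ[1..]` satisfies `RmNext(xnf(ψ)^p |_σ)` (empty-suffix semantics at the end). -/
theorem rmNext_step_correct (ψ : LTLf P) (σ : Set P) (ρ : List (Set P))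
    (h : ρ.head? = some σ) :
    Sat ρ ψ 0 ↔ Sat ρ.tail (rmNext (substLit σ (xnf ψ))) 0 := by
  obtain ⟨a, ρ', rfl⟩ : ∃ a ρ', ρ = a :: ρ' := by
    cases ρ with
    | nil => simp at h
    | cons a ρ' => exact ⟨a, ρ', rfl⟩
  have ha : a = σ := by simpa using h
  subst ha
  have h0 : 0 < (a :: ρ').length := by simp
  have hσ : (a :: ρ').getD 0 ∅ = a := rfl
  rw [← sat_xnf (a :: ρ') ψ 0, ← sat_substLit (a :: ρ') a 0 h0 hσ (xnf ψ)]
  exact sat_rmNext _ h0 (xnfProp_substLit_xnf a ψ)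

end LTLfSynth
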